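/- Let D be a sun on at least 3 vertices (hence D has at least 6 vertices). Then D has a subgraph F₁ each of whose components is a path on 4 or 5 vertices, such that F₁ covers every vertex of D except a single vertex y whose degree in D is one, and the (unique) neighbor of y in D has degree 2 in F₁. -/

import Mathlib

/-- `H` is (isomorphic to) a path on `n` vertices. -/
def IsPathOn {W : Type*} (H : SimpleGraph W) (n : ℕ) : Prop :=
  Nonempty (H ≃g SimpleGraph.pathGraph n)

/-- A graph is factor-critical if deleting any vertex leaves a graph with a perfect
matching. -/
def IsFactorCritical {W : Type*} (R : SimpleGraph W) : Prop :=
  ∀ x : W, ∃ M : (R.induce {y : W | y ≠ x}).Subgraph, M.IsPerfectMatching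

/-- `H` is a sun: `H = K₁`, `H = K₂`, or `H` is obtained from a factor-critical graph `R`
(its core, here an induced subgraph on a vertex set `R`) by attaching to each core vertex
`v` a pendant vertex `p v` whose unique neighbor is `v`. -/
def IsSun {W : Type*} (H : SimpleGraph W) : Prop :=
  Nat.card W = 1 ∨
  (Nat.card W = 2 ∧ ∀ u v : W, u ≠ v → H.Adj u v) ∨
  ∃ (R : Set W) (p : R ≃ (Rᶜ : Set W)),
    IsFactorCritical (H.induce R) ∧
    (∀ v : R, H.Adj (↑v) (↑(p v))) ∧
    (∀ u : (Rᶜ : Set W), ∀ x : W, H.Adj (↑u) x ↔ x = ↑(p.symm u))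

/-- The number of connected components of `G − S` that are suns. -/
noncomputable def sunCount {V : Type*} [Fintype V] (G : SimpleGraph V) (S : Set V) : ℕ :=
  Nat.card {c : (G.induce Sᶜ).ConnectedComponent //
    IsSun ((G.induce Sᶜ).induce c.supp)}

/-- `H` has a `{P₃, P₄, P₅}`-factor: a spanning subgraph each of whose components is a
path on 3, 4, or 5 vertices. -/
def HasPPPFactor {W : Type*} (H : SimpleGraph W) : Prop :=
  ∃ F : SimpleGraph W, F ≤ H ∧ ∀ c : F.ConnectedComponent,
    IsPathOn (F.induce c.supp) 3 ∨ IsPathOn (F.induce c.supp) 4 ∨ IsPathOn (F.induce c.supp) 5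

open SimpleGraph

/-- A system of vertex-disjoint paths in a graph `F`: `ok k` says index `k` is used,
`len k` is the number of vertices of path `k`, `e k i` is the `i`-th vertex. -/
structure PathSys {V : Type*} {ι : Type*} (F : SimpleGraph V) (ok : ι → Prop)
    (len : ι → ℕ) (e : ι → ℕ → V) : Prop where
  hadj : ∀ a b, F.Adj a b ↔ ∃ k, ok k ∧ ∃ i j, i < len k ∧ j < len k ∧
    a = e k i ∧ b = e k j ∧ (i + 1 = j ∨ j + 1 = i)
  hinj : ∀ k k' i i', ok k → ok k' → i < len k → i' < len k' →
    e k i = e k' i' → k = k' ∧ i = i'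
  hlen : ∀ k, ok k → 2 ≤ len k

namespace PathSys

variable {V : Type*} {ι : Type*} {F : SimpleGraph V} {ok : ι → Prop}
  {len : ι → ℕ} {e : ι → ℕ → V}

lemma adj_step (P : PathSys F ok len e) {k : ι} (hk : ok k) {i : ℕ} (hi : i + 1 < len k) :
    F.Adj (e k i) (e k (i + 1)) := by
  rw [P.hadj]
  exact ⟨k, hk, i, i + 1, by omega, hi, rfl, rfl, Or.inl rfl⟩

lemma support_eq (P : PathSys F ok len e) : F.support = {a | ∃ k i, ok k ∧ i < len k ∧ e k i = a} := by
  ext a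
  simp only [mem_support, Set.mem_setOf_eq]
  constructor
  · rintro ⟨b, hab⟩
    rw [P.hadj] at hab
    obtain ⟨k, hk, i, j, hi, hj, rfl, -⟩ := hab
    exact ⟨k, i, hk, hi, rfl⟩
  · rintro ⟨k, i, hk, hi, rfl⟩
    rcases lt_or_ge (i + 1) (len k) with h | h
    · exact ⟨_, P.adj_step hk h⟩
    · have h2 := P.hlen k hk
      have hi' : i - 1 + 1 = i := by omega
      refine ⟨e k (i - 1), ?_⟩
      rw [P.hadj]
      exact ⟨k, hk, i, i - 1, hi, by omega, rfl, rfl, Or.inr hi'⟩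

lemma reach (P : PathSys F ok len e) {k : ι} (hk : ok k) {i : ℕ} (hi : i < len k) :
    F.Reachable (e k 0) (e k i) := by
  induction i with
  | zero => exact Reachable.refl _
  | succ n ih => exact (ih (by omega)).trans (P.adj_step hk hi).reachable

lemma closed (P : PathSys F ok len e) {a b : V} (hab : F.Adj a b) {k : ι} (hk : ok k) {i : ℕ}
    (hi : i < len k) (ha : a = e k i) : ∃ j, j < len k ∧ b = e k j := by
  rw [P.hadj] at hab
  obtain ⟨k', hk', i', j', hi', hj', rfl, rfl, -⟩ := hab
  obtain ⟨rfl, rfl⟩ := P.hinj k' k i' i hk' hk hi' hi ha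
  exact ⟨j', hj', rfl⟩

lemma supp_eq (P : PathSys F ok len e) {k : ι} (hk : ok k) :
    (F.connectedComponentMk (e k 0)).supp = {a | ∃ i, i < len k ∧ e k i = a} := by
  have h2 := P.hlen k hk
  ext b
  simp only [ConnectedComponent.mem_supp_iff, ConnectedComponent.eq, Set.mem_setOf_eq]
  constructor
  · intro hr
    obtain ⟨w⟩ := hr.symm
    have : ∀ (x y : V) (_ : F.Walk x y), (∃ i, i < len k ∧ x = e k i) →
        ∃ i, i < len k ∧ y = e k i := by
      intro x y w
      induction w with
      | nil => exact fun h => h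
      | cons hadj _ ih =>
        rintro ⟨i, hi, rfl⟩
        obtain ⟨j, hj, hb⟩ := P.closed hadj hk hi rfl
        exact ih ⟨j, hj, hb⟩
    obtain ⟨i, hi, hb⟩ := this _ _ w ⟨0, by omega, rfl⟩
    exact ⟨i, hi, hb.symm⟩
  · rintro ⟨i, hi, rfl⟩
    exact (P.reach hk hi).symm

/-- The path `k` induces `pathGraph (len k)`. -/
lemma isPathOn (P : PathSys F ok len e) {k : ι} (hk : ok k) :
    Nonempty ((F.induce {a | ∃ i, i < len k ∧ e k i = a}) ≃g pathGraph (len k)) := by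
  set T : Set V := {a | ∃ i, i < len k ∧ e k i = a} with hT
  have hbij : Function.Bijective
      (fun i : Fin (len k) => (⟨e k i, ⟨i, i.2, rfl⟩⟩ : T)) := by
    constructor
    · intro i j hij
      have := (P.hinj k k i j hk hk i.2 j.2 (congrArg Subtype.val hij)).2
      exact Fin.ext this
    · rintro ⟨b, i, hi, rfl⟩
      exact ⟨⟨i, hi⟩, rfl⟩
  refine ⟨(SimpleGraph.Iso.symm ⟨Equiv.ofBijective _ hbij, ?_⟩)⟩
  intro i j
  show F.Adj (e k i) (e k j) ↔ _
  simp only [pathGraph_adj]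
  constructor
  · intro h
    rw [P.hadj] at h
    obtain ⟨k', hk', i', j', hi', hj', h1, h2, h3⟩ := h
    obtain ⟨h1k, h1i⟩ := P.hinj k k' i i' hk hk' i.2 hi' h1
    subst h1k
    obtain ⟨-, h2j⟩ := P.hinj k k j j' hk hk' j.2 hj' h2
    omega
  · intro h
    rw [P.hadj]
    exact ⟨k, hk, i, j, i.2, j.2, rfl, rfl, h⟩

lemma component_spec (P : PathSys F ok len e) (c : F.ConnectedComponent) (hc : c.supp.Nontrivial) :
    ∃ k, ok k ∧ c.supp = {a | ∃ i, i < len k ∧ e k i = a} := by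
  obtain ⟨a, ha, b, hb, hab⟩ := hc
  rw [ConnectedComponent.mem_supp_iff] at ha hb
  have hr : F.Reachable a b := by
    rw [← hb] at ha; exact (ConnectedComponent.exact ha)
  obtain ⟨w⟩ := hr
  have hadj : ∃ x, F.Adj a x := by
    cases w with
    | nil => exact absurd rfl hab
    | cons h _ => exact ⟨_, h⟩
  obtain ⟨x, hx⟩ := hadj
  rw [P.hadj] at hx
  obtain ⟨k, hk, i, j, hi, hj, rfl, -, -⟩ := hx
  refine ⟨k, hk, ?_⟩
  have : c = F.connectedComponentMk (e k 0) := by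
    rw [← ha]
    exact ConnectedComponent.sound (P.reach hk hi).symm
  rw [this, P.supp_eq hk]

lemma neighborSet_mid (P : PathSys F ok len e) {k : ι} (hk : ok k) {i : ℕ} (h0 : 0 < i) (hi : i + 1 < len k) :
    F.neighborSet (e k i) = {e k (i - 1), e k (i + 1)} := by
  ext b
  simp only [mem_neighborSet, Set.mem_insert_iff, Set.mem_singleton_iff]
  constructor
  · intro h
    rw [P.hadj] at h
    obtain ⟨k', hk', i', j', hi', hj', h1, rfl, h3⟩ := h
    obtain ⟨rfl, rfl⟩ := P.hinj k k' i i' hk hk' (by omega) hi' h1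
    rcases h3 with h | h
    · right; congr 1; omega
    · left; congr 1; omega
  · rintro (rfl | rfl)
    · rw [P.hadj]
      exact ⟨k, hk, i, i - 1, by omega, by omega, rfl, rfl, Or.inr (by omega)⟩
    · exact P.adj_step hk hi

lemma ncard_neighborSet_mid (P : PathSys F ok len e) {k : ι} (hk : ok k) {i : ℕ} (h0 : 0 < i)
    (hi : i + 1 < len k) : (F.neighborSet (e k i)).ncard = 2 := by
  rw [P.neighborSet_mid hk h0 hi]
  rw [Set.ncard_pair]
  intro h
  have := (P.hinj k k (i - 1) (i + 1) hk hk (by omega) hi h).2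
  omega

end PathSys

section SunInst

noncomputable def svord {V : Type*} [Fintype V] (v : V) : ℕ := Fintype.equivFin V v

lemma svord_inj {V : Type*} [Fintype V] : Function.Injective (svord (V := V)) :=
  fun a b h => (Fintype.equivFin V).injective (Fin.ext h)

variable {V : Type*} [Fintype V] {R : Set V} (p : ↥R ≃ ↥(Rᶜ : Set V)) {u : ↥R}

/-- The pendant of a core vertex, as a vertex of `V`. -/
def spend (v : ↥R) : V := ↑(p v)

variable (m : ↥{y : ↥R | y ≠ u} → ↥{y : ↥R | y ≠ u}) (X : ↥{y : ↥R | y ≠ u})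

/-- Valid path indices. -/
noncomputable def sok (k : ↥{y : ↥R | y ≠ u}) : Prop :=
  k = X ∨ (k ≠ X ∧ k ≠ m X ∧ svord (↑↑k : V) < svord (↑↑(m k) : V))

open Classical in
/-- Length of path `k`. -/
noncomputable def slen (k : ↥{y : ↥R | y ≠ u}) : ℕ := if k = X then 5 else 4

open Classical in
/-- Vertices of path `k`. -/
noncomputable def se (k : ↥{y : ↥R | y ≠ u}) (i : ℕ) : V :=
  if k = X then
    if i = 0 then spend p ↑(m X)
    else if i = 1 then ↑↑(m X)
    else if i = 2 then ↑↑X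
    else if i = 3 then ↑u
    else spend p u
  else
    if i = 0 then spend p ↑k
    else if i = 1 then ↑↑k
    else if i = 2 then ↑↑(m k)
    else spend p ↑(m k)

open Classical in
/-- Decoder: from a vertex, recover its path index and position. -/
noncomputable def sdec (v : V) : Option (↥{y : ↥R | y ≠ u} × ℕ) :=
  if hv : v ∈ R then
    if ha : (⟨v, hv⟩ : ↥R) = u then some (X, 3)
    else if (⟨⟨v, hv⟩, ha⟩ : ↥{y : ↥R | y ≠ u}) = X then some (X, 2)
    else if (⟨⟨v, hv⟩, ha⟩ : ↥{y : ↥R | y ≠ u}) = m X then some (X, 1)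
    else if svord v < svord (↑↑(m ⟨⟨v, hv⟩, ha⟩) : V) then some (⟨⟨v, hv⟩, ha⟩, 1)
    else some (m ⟨⟨v, hv⟩, ha⟩, 2)
  else
    if (p.symm ⟨v, hv⟩ : ↥R) = ↑X then none
    else if ha : (p.symm ⟨v, hv⟩ : ↥R) = u then some (X, 4)
    else if (⟨p.symm ⟨v, hv⟩, ha⟩ : ↥{y : ↥R | y ≠ u}) = m X then some (X, 0)
    else if svord (↑↑(⟨p.symm ⟨v, hv⟩, ha⟩ : ↥{y : ↥R | y ≠ u}) : V) <
        svord (↑↑(m ⟨p.symm ⟨v, hv⟩, ha⟩) : V) then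
      some (⟨p.symm ⟨v, hv⟩, ha⟩, 0)
    else some (m ⟨p.symm ⟨v, hv⟩, ha⟩, 3)

lemma sdec_se (hm1 : ∀ t, m (m t) = t) (hmne : ∀ t, m t ≠ t)
    (k : ↥{y : ↥R | y ≠ u}) (i : ℕ) (hk : sok m X k) (hi : i < slen X k) :
    sdec p m X (se p m X k i) = some (k, i) := by
  classical
  have cinj : ∀ s t : ↥{y : ↥R | y ≠ u}, (↑↑s : V) = ↑↑t → s = t :=
    fun s t h => Subtype.ext (Subtype.ext h)
  have minj : ∀ s t, m s = m t → s = t := fun s t h => by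
    rw [← hm1 s, h, hm1]
  rcases hk with heq | ⟨hk1, hk2, hk3⟩
  · rw [heq] at hi ⊢
    rw [slen, if_pos rfl] at hi
    have fmX1 : (↑(m X) : ↥R) ≠ ↑X := fun h => hmne X (Subtype.ext h)
    have fmX2 : (↑(m X) : ↥R) ≠ u := (m X).2
    have fXu : (↑X : ↥R) ≠ u := X.2
    have fmXX : m X ≠ X := hmne X
    interval_cases i
    · have hv : (↑(p ↑(m X)) : V) ∉ R := (p ↑(m X)).2
      simp [se, sdec, spend, hv, fmX1, fmX2]
    · have hv : (↑↑(m X) : V) ∈ R := (↑(m X) : ↥R).2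
      simp [se, sdec, hv, fmX2, fmXX]
    · have hv : (↑↑X : V) ∈ R := (↑X : ↥R).2
      simp [se, sdec, hv, fXu]
    · have hv : (↑u : V) ∈ R := u.2
      simp [se, sdec, hv]
    · have hv : (↑(p u) : V) ∉ R := (p u).2
      simp [se, sdec, spend, hv, fXu.symm]
  · have hmk1 : m k ≠ X := fun h => hk2 (by rw [← hm1 k, h])
    have hmk2 : m k ≠ m X := fun h => hk1 (minj _ _ h)
    have fk1 : (↑k : ↥R) ≠ ↑X := fun h => hk1 (Subtype.ext h)
    have fmk1 : (↑(m k) : ↥R) ≠ ↑X := fun h => hmk1 (Subtype.ext h)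
    have hsv : svord (↑↑k : V) ≠ svord (↑↑(m k) : V) := fun h =>
      hmne k (cinj _ _ (svord_inj h)).symm
    have hnlt : ¬ svord (↑↑(m k) : V) < svord (↑↑k : V) := by
      have := hk3; omega
    have fku : (↑k : ↥R) ≠ u := k.2
    have fmku : (↑(m k) : ↥R) ≠ u := (m k).2
    rw [slen, if_neg hk1] at hi
    interval_cases i
    · have hv : (↑(p ↑k) : V) ∉ R := (p ↑k).2
      simp [se, sdec, spend, hv, hk1, hk2, fk1, fku, hk3]
    · have hv : (↑↑k : V) ∈ R := (↑k : ↥R).2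
      simp [se, sdec, hv, hk1, hk2, fku, hk3]
    · have hv : (↑↑(m k) : V) ∈ R := (↑(m k) : ↥R).2
      simp [se, sdec, hv, hk1, hmk1, hmk2, fmku, hm1, hnlt]
    · have hv : (↑(p ↑(m k)) : V) ∉ R := (p ↑(m k)).2
      simp [se, sdec, spend, hv, hk1, hmk1, hmk2, fmk1, fmku, hm1, hnlt]

lemma se_X0 : se p m X X 0 = ↑(p ↑(m X)) := by simp [se, spend]
lemma se_X1 : se p m X X 1 = ↑↑(m X) := by simp [se]
lemma se_X2 : se p m X X 2 = ↑↑X := by simp [se]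
lemma se_X3 : se p m X X 3 = ↑u := by simp [se]
lemma se_X4 : se p m X X 4 = ↑(p u) := by simp [se, spend]
lemma se_g0 {k} (hk : k ≠ X) : se p m X k 0 = ↑(p ↑k) := by simp [se, spend, hk]
lemma se_g1 {k} (hk : k ≠ X) : se p m X k 1 = ↑↑k := by simp [se, hk]
lemma se_g2 {k} (hk : k ≠ X) : se p m X k 2 = ↑↑(m k) := by simp [se, hk]
lemma se_g3 {k} (hk : k ≠ X) : se p m X k 3 = ↑(p ↑(m k)) := by simp [se, spend, hk]

lemma sdec_pendX : sdec p m X (↑(p ↑X) : V) = none := by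
  classical
  have hv : (↑(p ↑X) : V) ∉ R := (p ↑X).2
  simp [sdec, hv]

lemma covered (hm1 : ∀ t, m (m t) = t) (hmne : ∀ t, m t ≠ t)
    (v : V) (hvy : v ≠ ↑(p ↑X)) :
    ∃ k i, sok m X k ∧ i < slen X k ∧ se p m X k i = v := by
  classical
  have cinj : ∀ s t : ↥{y : ↥R | y ≠ u}, (↑↑s : V) = ↑↑t → s = t :=
    fun s t h => Subtype.ext (Subtype.ext h)
  have minj : ∀ s t, m s = m t → s = t := fun s t h => by
    rw [← hm1 s, h, hm1]
  have hlenX : slen X X = 5 := by rw [slen, if_pos rfl]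
  have hlg : ∀ k, k ≠ X → slen X k = 4 := fun k hk => by rw [slen, if_neg hk]
  by_cases hv : v ∈ R
  · -- core vertex
    by_cases hau : (⟨v, hv⟩ : ↥R) = u
    · exact ⟨X, 3, Or.inl rfl, by omega, by rw [se_X3 p m X, ← hau]⟩
    · set t : ↥{y : ↥R | y ≠ u} := ⟨⟨v, hv⟩, hau⟩ with hT
      by_cases ht : t = X
      · exact ⟨X, 2, Or.inl rfl, by omega, by rw [se_X2 p m X, ← ht]⟩
      · by_cases htm : t = m X
        · exact ⟨X, 1, Or.inl rfl, by omega, by rw [se_X1 p m X, ← htm]⟩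
        · by_cases hsv : svord (↑↑t : V) < svord (↑↑(m t) : V)
          · exact ⟨t, 1, Or.inr ⟨ht, htm, hsv⟩, by rw [hlg t ht]; omega, by rw [se_g1 p m X ht]⟩
          · have hmt1 : m t ≠ X := fun h => htm (by rw [← hm1 t, h])
            have hmt2 : m t ≠ m X := fun h => ht (minj _ _ h)
            have hne : svord (↑↑t : V) ≠ svord (↑↑(m t) : V) := fun h =>
              hmne t (cinj _ _ (svord_inj h.symm))
            have hsv2 : svord (↑↑(m t) : V) < svord (↑↑(m (m t)) : V) := by
              rw [hm1]
              have : svord (↑↑t : V) ≠ svord (↑↑(m t) : V) := hne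
              omega
            refine ⟨m t, 2, Or.inr ⟨hmt1, hmt2, hsv2⟩, by rw [hlg _ hmt1]; omega, ?_⟩
            rw [se_g2 p m X hmt1, hm1]
  · -- pendant vertex
    have hpa : (↑(p (p.symm ⟨v, hv⟩)) : V) = v := by
      rw [Equiv.apply_symm_apply]
    set a : ↥R := p.symm ⟨v, hv⟩ with hA
    by_cases haX : a = ↑X
    · exact absurd (by rw [← hpa, haX]) hvy
    · by_cases hau : a = u
      · exact ⟨X, 4, Or.inl rfl, by omega, by rw [se_X4 p m X, ← hau, hpa]⟩
      · set t : ↥{y : ↥R | y ≠ u} := ⟨a, hau⟩ with hT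
        have ht : t ≠ X := fun h => haX (congrArg Subtype.val h)
        by_cases htm : t = m X
        · refine ⟨X, 0, Or.inl rfl, by omega, ?_⟩
          rw [se_X0 p m X, ← htm, hpa]
        · by_cases hsv : svord (↑↑t : V) < svord (↑↑(m t) : V)
          · exact ⟨t, 0, Or.inr ⟨ht, htm, hsv⟩, by rw [hlg t ht]; omega, by rw [se_g0 p m X ht]; exact hpa⟩
          · have hmt1 : m t ≠ X := fun h => htm (by rw [← hm1 t, h])
            have hmt2 : m t ≠ m X := fun h => ht (minj _ _ h)
            have hne : svord (↑↑t : V) ≠ svord (↑↑(m t) : V) := fun h =>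
              hmne t (cinj _ _ (svord_inj h.symm))
            have hsv2 : svord (↑↑(m t) : V) < svord (↑↑(m (m t)) : V) := by
              rw [hm1]; omega
            refine ⟨m t, 3, Or.inr ⟨hmt1, hmt2, hsv2⟩, by rw [hlg _ hmt1]; omega, ?_⟩
            rw [se_g3 p m X hmt1, hm1]
            exact hpa

end SunInst

/-- Claim 1(1): a sun `D` on at least 3 vertices has a `{P₄,P₅}`-packing `F₁` covering all
of `D` except a single vertex `y` of degree one in `D`, such that the neighbor of `y` in
`D` has degree 2 in `F₁`. -/
theorem sun_P4P5_packing {V : Type*} [Fintype V] (D : SimpleGraph V)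
    (hcard : 3 ≤ Nat.card V) (hsun : IsSun D) :
    ∃ (F₁ : SimpleGraph V) (y : V), F₁ ≤ D ∧
      (D.neighborSet y).ncard = 1 ∧
      F₁.support = {y}ᶜ ∧
      (∀ c : F₁.ConnectedComponent, (c.supp).Nontrivial →
        IsPathOn (F₁.induce c.supp) 4 ∨ IsPathOn (F₁.induce c.supp) 5) ∧
      (∀ z : V, D.Adj y z → (F₁.neighborSet z).ncard = 2) := by
  classical
  obtain h1 | ⟨h2, -⟩ | ⟨R, p, hFC, hpend, hcompl⟩ := hsun
  · omega
  · omega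
  have e1 : Nat.card ↥R = R.ncard := Nat.card_coe_set_eq R
  have e2 : Nat.card ↥(Rᶜ : Set V) = (Rᶜ : Set V).ncard := Nat.card_coe_set_eq _
  have hcc : R.ncard + (Rᶜ : Set V).ncard = Nat.card V := Set.ncard_add_ncard_compl R
  have h2 : Nat.card ↥(Rᶜ : Set V) = Nat.card ↥R := Nat.card_congr p.symm
  haveI : Nontrivial ↥R := Finite.one_lt_card_iff_nontrivial.mp (by omega)
  -- every core vertex has a neighbour in the core
  have hnbr : ∀ x : ↥R, ∃ z : ↥R, (D.induce R).Adj x z := by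
    intro x
    obtain ⟨x', hx'⟩ := exists_ne x
    obtain ⟨M, hM⟩ := hFC x'
    rw [SimpleGraph.Subgraph.isPerfectMatching_iff] at hM
    obtain ⟨w, hw, -⟩ := hM ⟨x, Ne.symm hx'⟩
    exact ⟨↑w, M.adj_sub hw⟩
  obtain ⟨x₀⟩ : Nonempty ↥R := inferInstance
  obtain ⟨u, hadj_xu⟩ := hnbr x₀
  have hx₀u : x₀ ≠ u := hadj_xu.ne
  obtain ⟨M, hM⟩ := hFC u
  rw [SimpleGraph.Subgraph.isPerfectMatching_iff] at hM
  choose m hm using fun t => hM t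
  have hm1 : ∀ t : ↥{y : ↥R | y ≠ u}, m (m t) = t :=
    fun t => ((hm (m t)).2 t ((hm t).1.symm)).symm
  have hmD : ∀ t : ↥{y : ↥R | y ≠ u}, D.Adj ↑↑t ↑↑(m t) := fun t => M.adj_sub (hm t).1
  have hmne : ∀ t : ↥{y : ↥R | y ≠ u}, m t ≠ t := by
    intro t h
    have hD := hmD t
    rw [h] at hD
    exact D.loopless.irrefl _ hD
  set X : ↥{y : ↥R | y ≠ u} := ⟨x₀, hx₀u⟩ with hX
  have hadjXu : D.Adj ↑↑X ↑u := hadj_xu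
  set y : V := ↑(p ↑X) with hy
  set F₁ : SimpleGraph V := SimpleGraph.fromRel (fun a b => ∃ k, sok m X k ∧
    ∃ i j, i < slen X k ∧ j < slen X k ∧ a = se p m X k i ∧ b = se p m X k j ∧
      (i + 1 = j ∨ j + 1 = i)) with hF
  have hinj : ∀ k k' i i', sok m X k → sok m X k' → i < slen X k → i' < slen X k' →
      se p m X k i = se p m X k' i' → k = k' ∧ i = i' := by
    intro k k' i i' hk hk' hi hi' he
    have d1 := sdec_se p m X hm1 hmne k i hk hi
    have d2 := sdec_se p m X hm1 hmne k' i' hk' hi'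
    rw [he, d2] at d1
    simp only [Option.some.injEq, Prod.mk.injEq] at d1
    exact ⟨d1.1.symm, d1.2.symm⟩
  have hadj : ∀ a b, F₁.Adj a b ↔ ∃ k, sok m X k ∧ ∃ i j, i < slen X k ∧
      j < slen X k ∧ a = se p m X k i ∧ b = se p m X k j ∧ (i + 1 = j ∨ j + 1 = i) := by
    intro a b
    rw [hF, SimpleGraph.fromRel_adj]
    constructor
    · rintro ⟨hne, h | h⟩
      · exact h
      · obtain ⟨k, hk, i, j, hi, hj, hb, ha, hij⟩ := h
        exact ⟨k, hk, j, i, hj, hi, ha, hb, hij.symm⟩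
    · intro h
      refine ⟨?_, Or.inl h⟩
      obtain ⟨k, hk, i, j, hi, hj, ha, hb, hij⟩ := h
      intro hab
      have := (hinj k k i j hk hk hi hj (by rw [← ha, hab, hb])).2
      omega
  have P : PathSys F₁ (sok m X) (slen X) (se p m X) := by
    refine ⟨hadj, hinj, ?_⟩
    intro k hk
    rw [slen]
    split <;> omega
  have hyz : ∀ z, D.Adj y z ↔ z = ↑↑X := by
    intro z
    have h := hcompl (p ↑X) z
    rw [Equiv.symm_apply_apply] at h
    exact h
  have step : ∀ k, sok m X k → ∀ i, i + 1 < slen X k →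
      D.Adj (se p m X k i) (se p m X k (i + 1)) := by
    intro k hk i hi
    rcases eq_or_ne k X with heq | hkX
    · subst heq
      rw [slen, if_pos rfl] at hi
      have hi4 : i ≤ 3 := by omega
      interval_cases i
      · rw [show (0:ℕ) + 1 = 1 from rfl, se_X0 p m X, se_X1 p m X]
        exact (hpend ↑(m X)).symm
      · rw [show (1:ℕ) + 1 = 2 from rfl, se_X1 p m X, se_X2 p m X]
        exact (hmD X).symm
      · rw [show (2:ℕ) + 1 = 3 from rfl, se_X2 p m X, se_X3 p m X]
        exact hadjXu
      · rw [show (3:ℕ) + 1 = 4 from rfl, se_X3 p m X, se_X4 p m X]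
        exact hpend u
    · rw [slen, if_neg hkX] at hi
      have hi3 : i ≤ 2 := by omega
      interval_cases i
      · rw [show (0:ℕ) + 1 = 1 from rfl, se_g0 p m X hkX, se_g1 p m X hkX]
        exact (hpend ↑k).symm
      · rw [show (1:ℕ) + 1 = 2 from rfl, se_g1 p m X hkX, se_g2 p m X hkX]
        exact hmD k
      · rw [show (2:ℕ) + 1 = 3 from rfl, se_g2 p m X hkX, se_g3 p m X hkX]
        exact hpend ↑(m k)
  refine ⟨F₁, y, ?_, ?_, ?_, ?_, ?_⟩
  · -- F₁ ≤ D
    intro a b hab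
    obtain ⟨k, hk, i, j, hi, hj, ha, hb, hij⟩ := (hadj a b).mp hab
    rcases hij with rfl | rfl
    · rw [ha, hb]
      exact step k hk i hj
    · rw [ha, hb]
      exact (step k hk j hi).symm
  · -- degree of y in D
    have hset : D.neighborSet y = {↑↑X} := by
      ext z
      rw [SimpleGraph.mem_neighborSet, hyz z, Set.mem_singleton_iff]
    rw [hset, Set.ncard_singleton]
  · -- support
    rw [P.support_eq]
    ext v
    simp only [Set.mem_setOf_eq, Set.mem_compl_iff, Set.mem_singleton_iff]
    constructor
    · rintro ⟨k, i, hk, hi, he⟩ rfl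
      have d1 := sdec_se p m X hm1 hmne k i hk hi
      rw [he, hy, sdec_pendX p m X] at d1
      exact Option.some_ne_none _ d1.symm
    · intro hvy
      obtain ⟨k, i, hk, hi, he⟩ := covered p m X hm1 hmne v hvy
      exact ⟨k, i, hk, hi, he⟩
  · -- components are P₄ or P₅
    intro c hc
    obtain ⟨k, hk, hsupp⟩ := P.component_spec c hc
    obtain ⟨iso⟩ := P.isPathOn hk
    rcases eq_or_ne k X with heq | hne
    · right
      rw [hsupp]
      have hL : slen X k = 5 := by rw [heq, slen, if_pos rfl]
      rw [hL] at iso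
      rw [hL]
      exact ⟨iso⟩
    · left
      rw [hsupp]
      have hL : slen X k = 4 := by rw [slen, if_neg hne]
      rw [hL] at iso
      rw [hL]
      exact ⟨iso⟩
  · -- degree-two neighbour
    intro z hz
    rw [(hyz z).mp hz]
    have h2' := P.ncard_neighborSet_mid (k := X) (Or.inl rfl) (i := 2) (by omega)
      (by rw [slen, if_pos rfl]; omega)
    rw [se_X2 p m X] at h2'
    exact h2'
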